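/- Let P : [0,∞)×[0,∞) → [0,∞) be symmetric and moderately increasing in each variable. Then P is continuous on (0,∞)×(0,∞). -/

import Mathlib

set_option maxHeartbeats 1000000 in
/-- A symmetric, moderately increasing function `P : [0,∞)×[0,∞) → [0,∞)`
is continuous on `(0,∞)×(0,∞)`. -/
theorem stmt_1 (P : ℝ → ℝ → ℝ)
    (hnonneg : ∀ x y, 0 ≤ x → 0 ≤ y → 0 ≤ P x y)
    (hsymm : ∀ x y, 0 ≤ x → 0 ≤ y → P x y = P y x)
    (hmono : ∀ x, 0 < x → MonotoneOn (P x) (Set.Ioi 0))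
    (hMI : ∀ x, 0 < x → AntitoneOn (fun y => P x y / y) (Set.Ioi 0)) :
    ContinuousOn (fun p : ℝ × ℝ => P p.1 p.2) (Set.Ioi 0 ×ˢ Set.Ioi 0) := by
  -- stretching inequality in one variable
  have haux : ∀ x a b : ℝ, 0 < x → 0 < a → a ≤ b → P x b ≤ (b / a) * P x a := by
    intro x a b hx ha hab
    have hb : 0 < b := lt_of_lt_of_le ha hab
    have h := hMI x hx (Set.mem_Ioi.2 ha) (Set.mem_Ioi.2 hb) hab
    simp only at h
    rw [div_le_div_iff₀ hb ha] at h
    rw [div_mul_eq_mul_div, le_div_iff₀ ha]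
    linarith
  -- joint monotonicity
  have hmono2 : ∀ x x' y y' : ℝ, 0 < x → 0 < y → x ≤ x' → y ≤ y' → P x y ≤ P x' y' := by
    intro x x' y y' hx hy hxx hyy
    have hx' : 0 < x' := lt_of_lt_of_le hx hxx
    have hy' : 0 < y' := lt_of_lt_of_le hy hyy
    calc P x y ≤ P x y' := hmono x hx (Set.mem_Ioi.2 hy) (Set.mem_Ioi.2 hy') hyy
    _ = P y' x := hsymm x y' hx.le hy'.le
    _ ≤ P y' x' := hmono y' hy' (Set.mem_Ioi.2 hx) (Set.mem_Ioi.2 hx') hxx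
    _ = P x' y' := hsymm y' x' hy'.le hx'.le
  -- scaling inequality in both variables
  have hscale : ∀ L x y : ℝ, 1 ≤ L → 0 < x → 0 < y → P (L * x) (L * y) ≤ L ^ 2 * P x y := by
    intro L x y hL hx hy
    have hL0 : 0 < L := lt_of_lt_of_le one_pos hL
    have hLy : 0 < L * y := mul_pos hL0 hy
    have hLx : 0 < L * x := mul_pos hL0 hx
    have h1 : P (L * x) (L * y) ≤ (L * y / y) * P (L * x) y :=
      haux (L * x) y (L * y) hLx hy (le_mul_of_one_le_left hy.le hL)
    have h2 : P (L * x) y = P y (L * x) := hsymm _ _ hLx.le hy.le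
    have h3 : P y (L * x) ≤ (L * x / x) * P y x :=
      haux y x (L * x) hy hx (le_mul_of_one_le_left hx.le hL)
    have h4 : P y x = P x y := hsymm _ _ hy.le hx.le
    have hq1 : L * y / y = L := by field_simp
    have hq2 : L * x / x = L := by field_simp
    rw [hq1] at h1; rw [hq2] at h3
    rw [h2] at h1; rw [h4] at h3
    nlinarith [hnonneg x y hx.le hy.le]
  rintro ⟨x₀, y₀⟩ hp
  obtain ⟨hx₀, hy₀⟩ := hp
  simp only [Set.mem_Ioi] at hx₀ hy₀
  rw [Metric.continuousWithinAt_iff]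
  intro ε hε
  obtain ⟨c, hc⟩ : ∃ c, c = P x₀ y₀ := ⟨_, rfl⟩
  rw [← hc]
  have hc0 : 0 ≤ c := hc ▸ hnonneg _ _ hx₀.le hy₀.le
  obtain ⟨m, hm⟩ : ∃ m : ℝ, m = min 1 (ε / (3 * (c + 1))) := ⟨_, rfl⟩
  have hm0 : 0 < m := hm ▸ lt_min one_pos (div_pos hε (by linarith))
  have hm1 : m ≤ 1 := hm ▸ min_le_left _ _
  have hm2 : m ≤ ε / (3 * (c + 1)) := hm ▸ min_le_right _ _
  obtain ⟨L, hLdef⟩ : ∃ L : ℝ, L = 1 + m := ⟨_, rfl⟩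
  have hL1 : 1 < L := by rw [hLdef]; linarith
  have hL0 : 0 < L := lt_trans one_pos hL1
  have hL2 : L ≤ 2 := by rw [hLdef]; linarith
  have hminpos : 0 < min x₀ y₀ := lt_min hx₀ hy₀
  have hLm1' : 0 < L - 1 := by linarith
  refine ⟨(L - 1) / L * min x₀ y₀, by positivity, ?_⟩
  rintro ⟨x, y⟩ hxy hdist
  obtain ⟨hx, hy⟩ := hxy
  simp only [Set.mem_Ioi] at hx hy
  rw [Prod.dist_eq] at hdist
  have hdx : |x - x₀| < (L - 1) / L * min x₀ y₀ :=
    lt_of_le_of_lt (le_max_left _ _) (by simpa [Real.dist_eq] using hdist)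
  have hdy : |y - y₀| < (L - 1) / L * min x₀ y₀ :=
    lt_of_le_of_lt (le_max_right _ _) (by simpa [Real.dist_eq] using hdist)
  rw [abs_sub_lt_iff] at hdx hdy
  have hminx : min x₀ y₀ ≤ x₀ := min_le_left _ _
  have hminy : min x₀ y₀ ≤ y₀ := min_le_right _ _
  have hLm1 : 0 < L - 1 := by linarith
  have hdd : (L - 1) / L * min x₀ y₀ ≤ (L - 1) / L * x₀ :=
    mul_le_mul_of_nonneg_left hminx (by positivity)
  have hdd' : (L - 1) / L * min x₀ y₀ ≤ (L - 1) / L * y₀ :=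
    mul_le_mul_of_nonneg_left hminy (by positivity)
  have hfrac : (L - 1) / L * x₀ = x₀ - x₀ / L := by field_simp
  have hfrac' : (L - 1) / L * y₀ = y₀ - y₀ / L := by field_simp
  have hx1 : x₀ / L ≤ x := by
    have := hdx.2; rw [hfrac] at hdd; linarith
  have hx2 : x ≤ L * x₀ := by
    have h := hdx.1
    have : (L - 1) / L * x₀ ≤ (L - 1) * x₀ := by
      apply mul_le_mul_of_nonneg_right _ hx₀.le
      rw [div_le_iff₀ hL0]; nlinarith
    linarith
  have hy1 : y₀ / L ≤ y := by
    have := hdy.2; rw [hfrac'] at hdd'; linarith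
  have hy2 : y ≤ L * y₀ := by
    have h := hdy.1
    have : (L - 1) / L * y₀ ≤ (L - 1) * y₀ := by
      apply mul_le_mul_of_nonneg_right _ hy₀.le
      rw [div_le_iff₀ hL0]; nlinarith
    linarith
  -- upper bound
  have hupper : P x y ≤ L ^ 2 * c := by
    calc P x y ≤ P (L * x₀) (L * y₀) :=
          hmono2 x (L * x₀) y (L * y₀) hx hy hx2 hy2
    _ ≤ L ^ 2 * c := hc ▸ hscale L x₀ y₀ hL1.le hx₀ hy₀
  -- lower bound
  have hlower : c ≤ L ^ 2 * P x y := by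
    have hxL : 0 < x₀ / L := div_pos hx₀ hL0
    have hyL : 0 < y₀ / L := div_pos hy₀ hL0
    have h1 : P x₀ y₀ = P (L * (x₀ / L)) (L * (y₀ / L)) := by
      rw [mul_div_cancel₀ _ (ne_of_gt hL0), mul_div_cancel₀ _ (ne_of_gt hL0)]
    calc c = P (L * (x₀ / L)) (L * (y₀ / L)) := hc.trans h1
    _ ≤ L ^ 2 * P (x₀ / L) (y₀ / L) := hscale L (x₀ / L) (y₀ / L) hL1.le hxL hyL
    _ ≤ L ^ 2 * P x y := by
        apply mul_le_mul_of_nonneg_left _ (by positivity)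
        exact hmono2 _ _ _ _ hxL hyL hx1 hy1
  -- conclude
  simp only [Real.dist_eq]
  rw [abs_sub_lt_iff]
  have hLsq : (L ^ 2 - 1) ≤ 3 * m := by nlinarith
  have hmc : 3 * m * (c + 1) ≤ ε := by
    have h3 : (0:ℝ) < 3 * (c + 1) := by linarith
    have h4 := (le_div_iff₀ h3).mp hm2
    linarith [h4]
  have hPxy : 0 ≤ P x y := hnonneg _ _ hx.le hy.le
  have h5 : (L ^ 2 - 1) * c ≤ 3 * m * c := mul_le_mul_of_nonneg_right hLsq hc0
  have hL2sq : 1 ≤ L ^ 2 := one_le_pow₀ hL1.le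
  have hLsqpos : (0:ℝ) < L ^ 2 := by positivity
  constructor
  · -- P x y - c < ε
    linarith [hupper, h5, hmc, hm0, hc0]
  · -- c - P x y < ε
    have h6 : c / L ^ 2 ≤ P x y := by
      rw [div_le_iff₀ hLsqpos]; nlinarith [hlower]
    have h7 : c - c / L ^ 2 ≤ (L ^ 2 - 1) * c := by
      have e : c - c / L ^ 2 = (L ^ 2 - 1) * c / L ^ 2 := by field_simp
      rw [e]
      exact div_le_self (by nlinarith) hL2sq
    linarith [h6, h7, h5, hmc, hm0]
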